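/- arXiv:1806.07366 — 3 statements merged into one kernel-verified Lean document; each statement's English description precedes it below -/
import Mathlib

section
/- Let z : [t₀, t₁] → ℝ^D solve dz/dt = f(z(t), t, θ) with f continuously differentiable, and let L be a differentiable function of z(t₁). Define the adjoint a(t) = ∂L/∂z(t) (the gradient of L(z(t₁)) with respect to the state at time t, via the flow map from t to t₁). Then a satisfies the ODE da(t)/dt = -a(t)ᵀ (∂f/∂z)(z(t), t, θ). -/
open Set Metric Real Filter Topology intervalIntegral MeasureTheory ContinuousLinearMap

lemma adj_confine {E : Type*} [NormedAddCommGroup E] [NormedSpace ℝ E] [CompleteSpace E]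
    (G : E → ℝ → E) (Y : ℝ → E → E) (x₀ : E) (a δ Cf : ℝ)
    (hG_cont : Continuous (fun p : E × ℝ => G p.1 p.2))
    (hY_cont : ∀ x, Continuous (fun v => Y v x))
    (hY_init : ∀ x, Y a x = x)
    (hY_ode : ∀ x u, HasDerivAt (fun v => Y v x) (G (Y u x) u) u)
    (hCf : 0 ≤ Cf)
    (hδ : 0 < δ) (hδ1 : δ ≤ 1/2) (hδC : Cf * δ ≤ 1/4)
    (hG_bound : ∀ w ∈ closedBall x₀ 1, ∀ u ∈ Icc a (a+δ), ‖G w u‖ ≤ Cf) :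
    ∀ x ∈ closedBall x₀ δ, ∀ u ∈ Icc a (a+δ), Y u x ∈ closedBall x₀ 1 := by
  intro x hx u hu
  by_contra hcon
  set B : Set ℝ := {v ∈ Icc a (a+δ) | 1 < dist (Y v x) x₀} with hBdef
  have hBne : B.Nonempty := ⟨u, hu, by simpa [mem_closedBall] using hcon⟩
  have hBbdd : BddBelow B := ⟨a, fun y hy => hy.1.1⟩
  set c := sInf B with hc
  have hcIcc : c ∈ Icc a (a+δ) := by
    have h1 : closure B ⊆ Icc a (a+δ) :=
      closure_minimal (fun y hy => hy.1) isClosed_Icc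
    exact h1 (csInf_mem_closure hBne hBbdd)
  have hgc : 1 ≤ dist (Y c x) x₀ := by
    have hcl : IsClosed {v : ℝ | 1 ≤ dist (Y v x) x₀} := by
      have : Continuous (fun v => dist (Y v x) x₀) := by fun_prop
      exact isClosed_le continuous_const this
    have hsub : closure B ⊆ {v : ℝ | 1 ≤ dist (Y v x) x₀} :=
      closure_minimal (fun y hy => le_of_lt hy.2) hcl
    exact hsub (csInf_mem_closure hBne hBbdd)
  have hIco : ∀ v ∈ Ico a c, dist (Y v x) x₀ ≤ 1 := by
    intro v hv
    by_contra hv1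
    have hvB : v ∈ B := ⟨⟨hv.1, le_trans hv.2.le hcIcc.2⟩, lt_of_not_ge hv1⟩
    exact absurd (csInf_le hBbdd hvB) (not_le.mpr hv.2)
  have hxδ : dist x x₀ ≤ δ := by simpa [mem_closedBall] using hx
  have hIcc : ∀ v ∈ Icc a c, dist (Y v x) x₀ ≤ 1 := by
    intro v hv
    rcases eq_or_lt_of_le hv.2 with h | h
    · rcases eq_or_lt_of_le hcIcc.1 with h' | h'
      · rw [h, ← h', hY_init]; linarith
      · subst h
        have hne : (𝓝[Ico a c] c).NeBot := by
          rw [← mem_closure_iff_nhdsWithin_neBot, closure_Ico (ne_of_lt h')]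
          exact ⟨le_of_lt h', le_refl c⟩
        have htd : Tendsto (fun w => dist (Y w x) x₀) (𝓝[Ico a c] c)
            (𝓝 (dist (Y c x) x₀)) := by
          have : Continuous (fun w => dist (Y w x) x₀) := by fun_prop
          exact (this.continuousAt).continuousWithinAt
        exact le_of_tendsto htd (eventually_nhdsWithin_of_forall hIco)
    · exact hIco v ⟨hv.1, h⟩
  -- FTC estimate
  have hint : ∀ w : E, IntervalIntegrable (fun v => G (Y v x) v) MeasureTheory.volume a c := by
    intro w
    exact (hG_cont.comp ((hY_cont x).prodMk continuous_id)).intervalIntegrable a c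
  have hftc : ∫ v in a..c, G (Y v x) v = Y c x - Y a x :=
    integral_eq_sub_of_hasDerivAt (fun v _ => hY_ode x v) (hint x)
  have hnorm : ‖Y c x - Y a x‖ ≤ Cf * |c - a| := by
    rw [← hftc]
    apply intervalIntegral.norm_integral_le_of_norm_le_const
    intro v hv
    rw [uIoc_of_le hcIcc.1] at hv
    have hv1 : v ∈ Icc a c := ⟨hv.1.le, hv.2⟩
    have hv2 : v ∈ Icc a (a+δ) := ⟨hv.1.le, le_trans hv.2 hcIcc.2⟩
    exact hG_bound _ (by simpa [mem_closedBall] using hIcc v hv1) _ hv2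
  have habs : |c - a| ≤ δ := by
    rw [abs_of_nonneg (by linarith [hcIcc.1])]; linarith [hcIcc.2]
  have : dist (Y c x) x₀ ≤ Cf * δ + δ := by
    calc dist (Y c x) x₀ ≤ dist (Y c x) x + dist x x₀ := dist_triangle _ _ _
    _ ≤ Cf * δ + δ := by
        refine add_le_add ?_ hxδ
        rw [hY_init] at hnorm
        rw [dist_eq_norm]
        calc ‖Y c x - x‖ ≤ Cf * |c - a| := hnorm
        _ ≤ Cf * δ := mul_le_mul_of_nonneg_left habs hCf
  linarith

lemma adj_gronwall {E : Type*} [NormedAddCommGroup E] [NormedSpace ℝ E] [CompleteSpace E]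
    (G : E → ℝ → E) (Y : ℝ → E → E) (x₀ : E) (a δ : ℝ) (C : NNReal)
    (hY_cont : ∀ x, Continuous (fun v => Y v x))
    (hY_init : ∀ x, Y a x = x)
    (hY_ode : ∀ x u, HasDerivAt (fun v => Y v x) (G (Y u x) u) u)
    (hδ : 0 < δ)
    (hG_lip : ∀ u ∈ Icc a (a+δ), LipschitzOnWith C (fun w => G w u) (closedBall x₀ 1))
    (hmem : ∀ x ∈ closedBall x₀ δ, ∀ u ∈ Icc a (a+δ), Y u x ∈ closedBall x₀ 1) :
    ∀ x ∈ closedBall x₀ δ, ∀ y ∈ closedBall x₀ δ, ∀ u ∈ Icc a (a+δ),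
      dist (Y u x) (Y u y) ≤ dist x y * exp (C * (u - a)) := by
  intro x hx y hy u hu
  -- clamped vector field
  set p : ℝ → ℝ := fun v => max a (min v (a+δ)) with hp
  have hpIcc : ∀ v, p v ∈ Icc a (a+δ) := by
    intro v
    constructor
    · exact le_max_left _ _
    · simp only [hp, max_le_iff]
      exact ⟨by linarith, min_le_right _ _⟩
  have hpid : ∀ v ∈ Icc a (a+δ), p v = v := by
    intro v hv
    simp only [hp]
    rw [min_eq_left hv.2, max_eq_right hv.1]
  set v' : ℝ → E → E := fun u w => G w (p u) with hv'
  have hv : ∀ u, LipschitzOnWith C (v' u) (closedBall x₀ 1) :=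
    fun u => hG_lip (p u) (hpIcc u)
  have key := dist_le_of_trajectories_ODE_of_mem (v := v') (s := fun _ => closedBall x₀ 1)
    (K := C) (a := a) (b := a + δ) (δ := dist x y) (fun u _ => hv u)
    ((hY_cont x).continuousOn)
    (fun u hu => by
      have := (hY_ode x u).hasDerivWithinAt (s := Ici u)
      rwa [show G (Y u x) u = v' u (Y u x) by simp only [hv']; rw [hpid u (Ico_subset_Icc_self hu)]] at this)
    (fun u hu => hmem x hx u (Ico_subset_Icc_self hu))
    ((hY_cont y).continuousOn)
    (fun u hu => by
      have := (hY_ode y u).hasDerivWithinAt (s := Ici u)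
      rwa [show G (Y u y) u = v' u (Y u y) by simp only [hv']; rw [hpid u (Ico_subset_Icc_self hu)]] at this)
    (fun u hu => hmem y hy u (Ico_subset_Icc_self hu))
    (by rw [hY_init, hY_init])
  exact key u hu

lemma adj_twosided {E : Type*} [NormedAddCommGroup E] [NormedSpace ℝ E] [CompleteSpace E]
    (G : E → ℝ → E) (Y : ℝ → E → E) (x₀ : E) (a δ Cf : ℝ) (C : NNReal)
    (hG_cont : Continuous (fun p : E × ℝ => G p.1 p.2))
    (hY_cont : ∀ x, Continuous (fun v => Y v x))
    (hY_init : ∀ x, Y a x = x)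
    (hY_ode : ∀ x u, HasDerivAt (fun v => Y v x) (G (Y u x) u) u)
    (hCf : 0 ≤ Cf)
    (hδ : 0 < δ) (hδ1 : δ ≤ 1/2) (hδC : Cf * δ ≤ 1/4)
    (hG_bound : ∀ w ∈ closedBall x₀ 1, ∀ u ∈ Icc (a-δ) (a+δ), ‖G w u‖ ≤ Cf)
    (hG_lip : ∀ u ∈ Icc (a-δ) (a+δ), LipschitzOnWith C (fun w => G w u) (closedBall x₀ 1)) :
    (∀ x ∈ closedBall x₀ δ, ∀ u ∈ Icc (a-δ) (a+δ), Y u x ∈ closedBall x₀ 1) ∧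
    (∀ x ∈ closedBall x₀ δ, ∀ y ∈ closedBall x₀ δ, ∀ u ∈ Icc (a-δ) (a+δ),
      dist (Y u x) (Y u y) ≤ dist x y * exp (C * δ)) := by
  -- reflected system
  set Yr : ℝ → E → E := fun v x => Y (2*a - v) x with hYr
  set Gr : E → ℝ → E := fun w v => -G w (2*a - v) with hGr
  have hYr_cont : ∀ x, Continuous (fun v => Yr v x) := by
    intro x
    exact (hY_cont x).comp (by continuity)
  have hYr_init : ∀ x, Yr a x = x := by
    intro x; simp only [hYr]; rw [show 2*a - a = a by ring, hY_init]
  have hYr_ode : ∀ x u, HasDerivAt (fun v => Yr v x) (Gr (Yr u x) u) u := by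
    intro x u
    have h1 : HasDerivAt (fun v : ℝ => 2*a - v) (-1) u := by
      simpa using (hasDerivAt_id u).const_sub (2*a)
    have h2 := (hY_ode x (2*a - u)).scomp u h1
    simpa [hYr, hGr, Function.comp_def] using h2
  have hGr_cont : Continuous (fun p : E × ℝ => Gr p.1 p.2) := by
    apply Continuous.neg
    exact hG_cont.comp (continuous_fst.prodMk (continuous_const.sub continuous_snd))
  have hmap : ∀ v ∈ Icc a (a+δ), 2*a - v ∈ Icc (a-δ) (a+δ) := by
    intro v hv; constructor <;> [linarith [hv.2]; linarith [hv.1]]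
  have hGr_bound : ∀ w ∈ closedBall x₀ 1, ∀ v ∈ Icc a (a+δ), ‖Gr w v‖ ≤ Cf := by
    intro w hw v hv
    simpa [hGr] using hG_bound w hw _ (hmap v hv)
  have hGr_lip : ∀ v ∈ Icc a (a+δ), LipschitzOnWith C (fun w => Gr w v) (closedBall x₀ 1) := by
    intro v hv
    intro p hp q hq
    simpa [hGr, edist_neg_neg] using hG_lip _ (hmap v hv) hp hq
  have hfwd_mem := adj_confine G Y x₀ a δ Cf hG_cont hY_cont hY_init hY_ode hCf hδ hδ1 hδC
    (fun w hw u hu => hG_bound w hw u ⟨by linarith [hu.1], hu.2⟩)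
  have hbwd_mem := adj_confine Gr Yr x₀ a δ Cf hGr_cont hYr_cont hYr_init hYr_ode hCf hδ hδ1 hδC
    hGr_bound
  have hmem : ∀ x ∈ closedBall x₀ δ, ∀ u ∈ Icc (a-δ) (a+δ), Y u x ∈ closedBall x₀ 1 := by
    intro x hx u hu
    rcases le_total a u with h | h
    · exact hfwd_mem x hx u ⟨h, hu.2⟩
    · have : Y u x = Yr (2*a - u) x := by simp only [hYr]; ring_nf
      rw [this]
      exact hbwd_mem x hx _ ⟨by linarith, by linarith [hu.1]⟩
  refine ⟨hmem, ?_⟩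
  have hfwd_lip := adj_gronwall G Y x₀ a δ C hY_cont hY_init hY_ode hδ
    (fun u hu => hG_lip u ⟨by linarith [hu.1], hu.2⟩)
    (fun x hx u hu => hmem x hx u ⟨by linarith [hu.1], hu.2⟩)
  have hbwd_lip := adj_gronwall Gr Yr x₀ a δ C hYr_cont hYr_init hYr_ode hδ hGr_lip
    (fun x hx u hu => by
      have : Yr u x = Y (2*a - u) x := rfl
      rw [this]; exact hmem x hx _ (hmap u hu))
  intro x hx y hy u hu
  have hC0 : (0:ℝ) ≤ (C:ℝ) := C.coe_nonneg
  have hmono : ∀ w : ℝ, w ≤ δ → dist x y * exp (C * w) ≤ dist x y * exp (C * δ) := by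
    intro w hw
    apply mul_le_mul_of_nonneg_left _ dist_nonneg
    exact exp_le_exp.mpr (by nlinarith)
  rcases le_total a u with h | h
  · calc dist (Y u x) (Y u y) ≤ dist x y * exp (C * (u - a)) :=
        hfwd_lip x hx y hy u ⟨h, hu.2⟩
    _ ≤ dist x y * exp (C * δ) := hmono _ (by linarith [hu.2])
  · have he : Y u x = Yr (2*a - u) x := by simp only [hYr]; ring_nf
    have he' : Y u y = Yr (2*a - u) y := by simp only [hYr]; ring_nf
    rw [he, he']
    calc dist (Yr (2*a-u) x) (Yr (2*a-u) y) ≤ dist x y * exp (C * ((2*a-u) - a)) :=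
        hbwd_lip x hx y hy _ ⟨by linarith, by linarith [hu.1]⟩
    _ ≤ dist x y * exp (C * δ) := hmono _ (by linarith [hu.1])

set_option maxHeartbeats 2000000 in
lemma adj_variational {D : ℕ} (F : (Fin D → ℝ) → ℝ → (Fin D → ℝ))
    (hF : ContDiff ℝ 1 (fun q : (Fin D → ℝ) × ℝ => F q.1 q.2))
    (Y : ℝ → (Fin D → ℝ) → (Fin D → ℝ)) (a : ℝ) (x₀ : Fin D → ℝ)
    (hY_init : ∀ x, Y a x = x)
    (hY_ode : ∀ x u, HasDerivAt (fun v => Y v x) (F (Y u x) u) u)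
    (hY_diff : ∀ u, Differentiable ℝ (Y u)) :
    HasDerivAt (fun u => fderiv ℝ (Y u) x₀) (fderiv ℝ (fun x => F x a) x₀) a := by
  set Fj : (Fin D → ℝ) × ℝ → (Fin D → ℝ) := fun q => F q.1 q.2 with hFjdef
  have hFj_diff : Differentiable ℝ Fj := hF.differentiable one_ne_zero
  set J : (Fin D → ℝ) →L[ℝ] (Fin D → ℝ) × ℝ := (ContinuousLinearMap.id ℝ (Fin D → ℝ)).prod 0 with hJdef
  set Dx : (Fin D → ℝ) → ℝ → ((Fin D → ℝ) →L[ℝ] (Fin D → ℝ)) := fun w u => (fderiv ℝ Fj (w, u)).comp J with hDxdef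
  have hDx : ∀ w u, HasFDerivAt (fun x => F x u) (Dx w u) w := by
    intro w u
    exact (hFj_diff (w, u)).hasFDerivAt.comp (f := fun x : Fin D → ℝ => (id x, u)) w ((hasFDerivAt_id w).prodMk (hasFDerivAt_const u w))
  have hJnorm : ‖J‖ ≤ 1 := by
    apply opNorm_le_bound _ zero_le_one
    intro x
    simp only [hJdef, prod_apply, coe_id', id_eq, zero_apply, one_mul, Prod.norm_def]
    simp [le_refl, norm_nonneg]
  have hDx_cont : Continuous (fun p : (Fin D → ℝ) × ℝ => Dx p.1 p.2) :=
    (hF.continuous_fderiv one_ne_zero).clm_comp continuous_const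
  -- compact bounds
  set K : Set ((Fin D → ℝ) × ℝ) := closedBall x₀ 1 ×ˢ Icc (a-1) (a+1) with hKdef
  have hK : IsCompact K := (isCompact_closedBall _ _).prod isCompact_Icc
  have hxa : (x₀, a) ∈ K := by
    refine ⟨mem_closedBall_self zero_le_one, ?_⟩
    constructor <;> simp <;> linarith
  obtain ⟨Cf, hCf⟩ := hK.exists_bound_of_continuousOn hF.continuous.continuousOn
  obtain ⟨Cd, hCd⟩ := hK.exists_bound_of_continuousOn hDx_cont.continuousOn
  have hCf0 : 0 ≤ Cf := le_trans (norm_nonneg _) (hCf _ hxa)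
  have hCd0 : 0 ≤ Cd := le_trans (norm_nonneg _) (hCd _ hxa)
  set δ : ℝ := min (1/2) (1/(4*(Cf+1))) with hδdef
  have hδpos : 0 < δ := lt_min (by norm_num) (by positivity)
  have hδ1 : δ ≤ 1/2 := min_le_left _ _
  have hδC : Cf * δ ≤ 1/4 := by
    have h1 : Cf * (1/(4*(Cf+1))) ≤ 1/4 := by
      rw [mul_one_div, div_le_div_iff₀ (by positivity) (by norm_num)]
      nlinarith
    calc Cf * δ ≤ Cf * (1/(4*(Cf+1))) :=
          mul_le_mul_of_nonneg_left (min_le_right _ _) hCf0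
    _ ≤ 1/4 := h1
  have hT : Icc (a-δ) (a+δ) ⊆ Icc (a-1) (a+1) := by
    intro u hu
    constructor <;> [linarith [hu.1]; linarith [hu.2]]
  have hY_cont : ∀ x, Continuous (fun v => Y v x) := by
    intro x
    have : Differentiable ℝ (fun v => Y v x) := fun u => (hY_ode x u).differentiableAt
    exact this.continuous
  set C : NNReal := Cd.toNNReal with hCdef
  have hClip : ∀ u ∈ Icc (a-δ) (a+δ), LipschitzOnWith C (fun w => F w u) (closedBall x₀ 1) := by
    intro u hu
    apply (convex_closedBall x₀ 1).lipschitzOnWith_of_nnnorm_hasFDerivWithin_le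
      (fun w hw => (hDx w u).hasFDerivWithinAt)
    intro w hw
    have h := hCd (w, u) ⟨hw, hT hu⟩
    rw [← NNReal.coe_le_coe, coe_nnnorm, Real.coe_toNNReal _ hCd0]
    exact h
  obtain ⟨hmem, hlip⟩ := adj_twosided F Y x₀ a δ Cf C hF.continuous hY_cont hY_init hY_ode
    hCf0 hδpos hδ1 hδC (fun w hw u hu => hCf (w, u) ⟨hw, hT hu⟩) hClip
  set Lb : ℝ := exp (C * δ) with hLbdef
  have hLb0 : 0 ≤ Lb := (exp_pos _).le
  have hfd_bound : ∀ u ∈ Icc (a-δ) (a+δ), ∀ x ∈ ball x₀ δ, ‖fderiv ℝ (Y u) x‖ ≤ Lb := by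
    intro u hu x hx
    have hlipu : LipschitzOnWith Lb.toNNReal (Y u) (closedBall x₀ δ) := by
      apply LipschitzOnWith.of_dist_le_mul
      intro p hp q hq
      rw [Real.coe_toNNReal _ hLb0, mul_comm]
      exact hlip p hp q hq u hu
    have := (hY_diff u x).hasFDerivAt.le_of_lipschitzOn
      (mem_of_superset (isOpen_ball.mem_nhds hx) ball_subset_closedBall) hlipu
    rwa [Real.coe_toNNReal _ hLb0] at this
  set M : ℝ → ((Fin D → ℝ) →L[ℝ] (Fin D → ℝ)) := fun u => fderiv ℝ (Y u) x₀ with hMdef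
  -- strong measurability of M
  have hM_meas : StronglyMeasurable M := by
    set Mn : ℕ → ℝ → ((Fin D → ℝ) →L[ℝ] (Fin D → ℝ)) := fun n u =>
      ∑ j : Fin D, (ContinuousLinearMap.proj (R := ℝ) (φ := fun _ : Fin D => ℝ) j).smulRight
        (((n:ℝ)+1) • (Y u (x₀ + ((n:ℝ)+1)⁻¹ • (Pi.single j 1 : Fin D → ℝ)) - Y u x₀)) with hMndef
    have hMn_cont : ∀ n, Continuous (Mn n) := by
      intro n
      apply continuous_finset_sum
      intro j _
      exact (smulRightL ℝ (Fin D → ℝ) (Fin D → ℝ) (ContinuousLinearMap.proj j)).continuous.comp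
        (((hY_cont (x₀ + ((n:ℝ)+1)⁻¹ • (Pi.single j 1 : Fin D → ℝ))).sub (hY_cont x₀)).const_smul ((n:ℝ)+1))
    have hc : Tendsto (fun n : ℕ => ‖((n:ℝ)+1)‖) atTop atTop := by
      simp only [Real.norm_eq_abs]
      have h1 : ∀ n : ℕ, |((n:ℝ)+1)| = (n:ℝ)+1 := fun n => abs_of_nonneg (by positivity)
      simp only [h1]
      exact tendsto_atTop_add_const_right _ 1 tendsto_natCast_atTop_atTop
    have hMtend : Tendsto Mn atTop (𝓝 M) := by
      rw [tendsto_pi_nhds]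
      intro u
      have hterm : ∀ j : Fin D, Tendsto
          (fun n : ℕ => ((n:ℝ)+1) • (Y u (x₀ + ((n:ℝ)+1)⁻¹ • (Pi.single j 1 : Fin D → ℝ)) - Y u x₀))
          atTop (𝓝 (M u ((Pi.single j 1 : Fin D → ℝ)))) :=
        fun j => (hY_diff u x₀).hasFDerivAt.lim ((Pi.single j 1 : Fin D → ℝ)) hc
      have hsum : Tendsto (fun n => Mn n u) atTop
          (𝓝 (∑ j : Fin D, (ContinuousLinearMap.proj (R := ℝ) (φ := fun _ : Fin D => ℝ) j).smulRight
            (M u ((Pi.single j 1 : Fin D → ℝ))))) := by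
        apply tendsto_finset_sum
        intro j _
        exact ((smulRightL ℝ (Fin D → ℝ) (Fin D → ℝ) (ContinuousLinearMap.proj j)).continuous.tendsto _).comp (hterm j)
      convert hsum using 2
      refine ContinuousLinearMap.ext fun x => ?_
      have hx : x = ∑ j : Fin D, x j • (Pi.single j 1 : Fin D → ℝ) := by
        ext i
        simp [Finset.sum_apply, Pi.single_apply]
      calc (M u) x = M u (∑ j : Fin D, x j • (Pi.single j 1 : Fin D → ℝ)) := by rw [← hx]
      _ = ∑ j : Fin D, x j • M u (Pi.single j 1 : Fin D → ℝ) := by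
          rw [map_sum]
          exact Finset.sum_congr rfl fun j _ => (M u).map_smul _ _
      _ = (∑ j : Fin D, (ContinuousLinearMap.proj (R := ℝ) (φ := fun _ : Fin D => ℝ) j).smulRight
            (M u (Pi.single j 1 : Fin D → ℝ))) x := by
          simp [ContinuousLinearMap.sum_apply, smulRight_apply]
    exact stronglyMeasurable_of_tendsto atTop (fun n => (hMn_cont n).stronglyMeasurable) hMtend
  -- trajectory and its data
  set z : ℝ → (Fin D → ℝ) := fun u => Y u x₀ with hzdef
  have hz_cont : Continuous z := hY_cont x₀
  set A : ℝ → ((Fin D → ℝ) →L[ℝ] (Fin D → ℝ)) := fun u => Dx (z u) u with hAdef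
  have hA_cont : Continuous A := hDx_cont.comp (hz_cont.prodMk continuous_id)
  set H : ℝ → ((Fin D → ℝ) →L[ℝ] (Fin D → ℝ)) := fun u => (A u).comp (M u) with hHdef
  have hcomp_cont : Continuous (fun p : ((Fin D → ℝ) →L[ℝ] (Fin D → ℝ)) × ((Fin D → ℝ) →L[ℝ] (Fin D → ℝ)) => p.1.comp p.2) :=
    continuous_fst.clm_comp continuous_snd
  have hH_meas : StronglyMeasurable H :=
    hcomp_cont.comp_stronglyMeasurable ((hA_cont.stronglyMeasurable).prodMk hM_meas)
  have hz_mem : ∀ u ∈ Icc (a-δ) (a+δ), z u ∈ closedBall x₀ 1 :=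
    fun u hu => hmem x₀ (mem_closedBall_self hδpos.le) u hu
  have hH_bound : ∀ u ∈ Icc (a-δ) (a+δ), ‖H u‖ ≤ Cd * Lb := by
    intro u hu
    calc ‖H u‖ ≤ ‖A u‖ * ‖M u‖ := opNorm_comp_le _ _
    _ ≤ Cd * Lb := by
        apply mul_le_mul (hCd (z u, u) ⟨hz_mem u hu, hT hu⟩)
          (hfd_bound u hu x₀ (mem_ball_self hδpos)) (norm_nonneg _) hCd0
  -- integral representation of the trajectory
  have hrep : ∀ s x, Y s x = x + ∫ u in a..s, F (Y u x) u := by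
    intro s x
    have hcont : Continuous (fun u => F (Y u x) u) :=
      hF.continuous.comp ((hY_cont x).prodMk continuous_id)
    have := integral_eq_sub_of_hasDerivAt (f := fun v => Y v x)
      (fun u _ => hY_ode x u) (hcont.intervalIntegrable a s)
    simp only [hY_init] at this
    rw [this]
    abel
  have hsubIoc : ∀ s ∈ Icc (a-δ) (a+δ), Set.uIoc a s ⊆ Icc (a-δ) (a+δ) := by
    intro s hs
    refine uIoc_subset_uIcc.trans (uIcc_subset_Icc ?_ hs)
    constructor <;> [linarith; linarith]
  -- the key identity
  have hMs : ∀ s ∈ Icc (a-δ) (a+δ),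
      M s = ContinuousLinearMap.id ℝ (Fin D → ℝ) + ∫ u in a..s, H u := by
    intro s hs
    have hdom := intervalIntegral.hasFDerivAt_integral_of_dominated_of_fderiv_le
      (𝕜 := ℝ) (μ := volume) (a := a) (b := s) (x₀ := x₀) (s := ball x₀ δ)
      (F := fun x u => F (Y u x) u)
      (F' := fun x u => (Dx (Y u x) u).comp (fderiv ℝ (Y u) x))
      (bound := fun _ => Cd * Lb) (ball_mem_nhds x₀ hδpos)
      (Eventually.of_forall fun x =>
        (hF.continuous.comp ((hY_cont x).prodMk continuous_id)).aestronglyMeasurable)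
      ((hF.continuous.comp ((hY_cont x₀).prodMk continuous_id)).intervalIntegrable a s)
      hH_meas.aestronglyMeasurable
      (MeasureTheory.ae_of_all _ (fun u hu x hx => by
        have hu' := hsubIoc s hs hu
        calc ‖(Dx (Y u x) u).comp (fderiv ℝ (Y u) x)‖
            ≤ ‖Dx (Y u x) u‖ * ‖fderiv ℝ (Y u) x‖ := opNorm_comp_le _ _
        _ ≤ Cd * Lb := mul_le_mul
            (hCd (Y u x, u) ⟨hmem x (ball_subset_closedBall hx) u hu', hT hu'⟩)
            (hfd_bound u hu' x hx) (norm_nonneg _) hCd0))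
      intervalIntegrable_const
      (MeasureTheory.ae_of_all _ (fun u _ x _ =>
        (hDx (Y u x) u).comp x (hY_diff u x).hasFDerivAt))
    have heq : Y s = fun x => x + ∫ u in a..s, F (Y u x) u := funext (hrep s)
    have hYd : HasFDerivAt (Y s)
        (ContinuousLinearMap.id ℝ (Fin D → ℝ) + ∫ u in a..s, H u) x₀ := by
      rw [heq]
      exact (hasFDerivAt_id x₀).add hdom
    exact hYd.fderiv
  have haIcc : a ∈ Icc (a-δ) (a+δ) := by constructor <;> linarith
  have hM_a : M a = ContinuousLinearMap.id ℝ (Fin D → ℝ) := by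
    have h : Y a = (id : (Fin D → ℝ) → (Fin D → ℝ)) := funext hY_init
    simp only [hMdef, h]
    exact fderiv_id
  -- continuity of M at a
  have hMdiff : ∀ s ∈ Icc (a-δ) (a+δ), ‖M s - M a‖ ≤ (Cd * Lb) * |s - a| := by
    intro s hs
    rw [hMs s hs, hMs a haIcc, intervalIntegral.integral_same]
    simp only [add_zero, add_sub_cancel_left]
    exact intervalIntegral.norm_integral_le_of_norm_le_const
      (fun u hu => hH_bound u (hsubIoc s hs hu))
  have hM_cont : ContinuousAt M a := by
    have h1 : ∀ᶠ s in 𝓝 a, ‖M s - M a‖ ≤ (Cd * Lb) * |s - a| := by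
      filter_upwards [Icc_mem_nhds (show a - δ < a by linarith) (show a < a + δ by linarith)]
        with s hs
      exact hMdiff s hs
    have h2 : Tendsto (fun s => (Cd * Lb) * |s - a|) (𝓝 a) (𝓝 0) := by
      have hco : Continuous (fun s : ℝ => (Cd * Lb) * |s - a|) :=
        continuous_const.mul ((continuous_id.sub continuous_const).abs)
      have := hco.tendsto a
      simpa using this
    have h3 : Tendsto (fun s => M s - M a) (𝓝 a) (𝓝 0) := squeeze_zero_norm' h1 h2
    rw [ContinuousAt, ← tendsto_sub_nhds_zero_iff]
    exact h3
  have hH_contAt : ContinuousAt H a :=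
    hcomp_cont.continuousAt.comp (hA_cont.continuousAt.prodMk hM_cont)
  have hN : HasDerivAt (fun s => ∫ u in a..s, H u) (H a) a :=
    intervalIntegral.integral_hasDerivAt_right IntervalIntegrable.refl
      hH_meas.stronglyMeasurableAtFilter hH_contAt
  have hM_deriv : HasDerivAt M (H a) a := by
    have h0 : HasDerivAt (fun s => ContinuousLinearMap.id ℝ (Fin D → ℝ) + ∫ u in a..s, H u)
        (H a) a := by
      simpa using (hN.const_add (ContinuousLinearMap.id ℝ (Fin D → ℝ)))
    apply h0.congr_of_eventuallyEq
    filter_upwards [Icc_mem_nhds (by linarith : a - δ < a) (by linarith : a < a + δ)] with s hs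
    exact hMs s hs
  have hHa : H a = fderiv ℝ (fun x => F x a) x₀ := by
    have h1 : z a = x₀ := hY_init x₀
    have h2 : fderiv ℝ (fun x => F x a) x₀ = Dx x₀ a := (hDx x₀ a).fderiv
    simp only [hHdef, hAdef, h1, hM_a, ContinuousLinearMap.comp_id, h2]
  rw [← hHa]
  exact hM_deriv
set_option maxHeartbeats 2000000 in
/-- Adjoint sensitivity: let `Φ s t` be the flow maps of `dz/dt = f(z,t,θ)` and let
`z` be a trajectory. Define the adjoint `a(t) = ∇L(z(t₁))ᵀ ∘ DΦ_{t→t₁}(z(t))`.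
Then `a` satisfies `da/dt = -a(t)ᵀ ∂f/∂z (z(t), t, θ)`. -/
theorem adjoint_ode
    {D P : ℕ} (f : (Fin D → ℝ) → ℝ → (Fin P → ℝ) → (Fin D → ℝ)) (θ : Fin P → ℝ)
    (hf : ContDiff ℝ 1 (fun q : (Fin D → ℝ) × ℝ => f q.1 q.2 θ))
    (Φ : ℝ → ℝ → (Fin D → ℝ) → (Fin D → ℝ))
    (hΦ_init : ∀ s x, Φ s s x = x)
    (hΦ_ode : ∀ s x t, HasDerivAt (fun u => Φ s u x) (f (Φ s t x) t θ) t)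
    (hΦ_diff : ∀ s t, Differentiable ℝ (Φ s t))
    (hΦ_comp : ∀ r s t x, Φ s t (Φ r s x) = Φ r t x)
    (z : ℝ → (Fin D → ℝ))
    (hz : ∀ t, HasDerivAt z (f (z t) t θ) t)
    (hz_flow : ∀ s t, Φ s t (z s) = z t)
    (t₁ : ℝ) (L : (Fin D → ℝ) → ℝ) (hL : DifferentiableAt ℝ L (z t₁))
    (t : ℝ) :
    HasDerivAt (fun s => ((fderiv ℝ L (z t₁)).comp (fderiv ℝ (Φ s t₁) (z s))))
      (-(((fderiv ℝ L (z t₁)).comp (fderiv ℝ (Φ t t₁) (z t))).comp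
          (fderiv ℝ (fun x => f x t θ) (z t)))) t := by
  set M : ℝ → ((Fin D → ℝ) →L[ℝ] (Fin D → ℝ)) := fun s => fderiv ℝ (Φ t s) (z t) with hMdef
  set B : ℝ → ((Fin D → ℝ) →L[ℝ] (Fin D → ℝ)) := fun s => fderiv ℝ (Φ s t) (z s) with hBdef
  set Df : (Fin D → ℝ) →L[ℝ] (Fin D → ℝ) := fderiv ℝ (fun x => f x t θ) (z t) with hDfdef
  have hM : HasDerivAt M Df t :=
    adj_variational (fun x u => f x u θ) hf (Φ t) t (z t)
      (fun x => hΦ_init t x) (fun x u => hΦ_ode t x u) (fun u => hΦ_diff t u)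
  -- B s is a two-sided inverse of M s
  have hBM : ∀ s, (B s).comp (M s) = ContinuousLinearMap.id ℝ (Fin D → ℝ) := by
    intro s
    have h := fderiv_comp (𝕜 := ℝ) (z t) (hΦ_diff s t (Φ t s (z t))) (hΦ_diff t s (z t))
    rw [hz_flow t s] at h
    rw [← h]
    have hcmp : (Φ s t) ∘ (Φ t s) = (id : (Fin D → ℝ) → (Fin D → ℝ)) := by
      funext x
      show Φ s t (Φ t s x) = x
      rw [hΦ_comp t s t x, hΦ_init]
    rw [hcmp, fderiv_id]
  have hMB : ∀ s, (M s).comp (B s) = ContinuousLinearMap.id ℝ (Fin D → ℝ) := by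
    intro s
    have h := fderiv_comp (𝕜 := ℝ) (z s) (hΦ_diff t s (Φ s t (z s))) (hΦ_diff s t (z s))
    rw [hz_flow s t] at h
    rw [← h]
    have hcmp : (Φ t s) ∘ (Φ s t) = (id : (Fin D → ℝ) → (Fin D → ℝ)) := by
      funext x
      show Φ t s (Φ s t x) = x
      rw [hΦ_comp s t s x, hΦ_init]
    rw [hcmp, fderiv_id]
  have hBinv : B = fun s => Ring.inverse (M s) := by
    funext s
    have hu := Ring.inverse_unit ⟨M s, B s,
      by rw [ContinuousLinearMap.mul_def, hMB s]; rfl,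
      by rw [ContinuousLinearMap.mul_def, hBM s]; rfl⟩
    exact hu.symm
  have hMt : M t = 1 := by
    have h : Φ t t = (id : (Fin D → ℝ) → (Fin D → ℝ)) := funext (hΦ_init t)
    simp only [hMdef, h, fderiv_id]
    rfl
  have hB_deriv : HasDerivAt B (-Df) t := by
    have h1 : HasFDerivAt (Ring.inverse)
        (-(ContinuousLinearMap.mulLeftRight ℝ ((Fin D → ℝ) →L[ℝ] (Fin D → ℝ)) 1 1)) (M t) := by
      have := hasFDerivAt_ringInverse (𝕜 := ℝ) (1 : ((Fin D → ℝ) →L[ℝ] (Fin D → ℝ))ˣ)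
      simpa [hMt] using this
    have h2 := h1.comp_hasDerivAt t hM
    have h3 : (-(ContinuousLinearMap.mulLeftRight ℝ ((Fin D → ℝ) →L[ℝ] (Fin D → ℝ)) 1 1)) Df
        = -Df := by
      simp [ContinuousLinearMap.mulLeftRight_apply]
    rw [h3] at h2
    rw [hBinv]
    exact h2
  -- chain rule reduction of the adjoint
  have hchain : ∀ s, fderiv ℝ (Φ s t₁) (z s) = (fderiv ℝ (Φ t t₁) (z t)).comp (B s) := by
    intro s
    have h := fderiv_comp (𝕜 := ℝ) (z s) (hΦ_diff t t₁ (Φ s t (z s))) (hΦ_diff s t (z s))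
    rw [hz_flow s t] at h
    have hcmp : (Φ t t₁) ∘ (Φ s t) = Φ s t₁ := funext fun x => hΦ_comp s t t₁ x
    rw [hcmp] at h
    exact h
  have htarget : (fun s => ((fderiv ℝ L (z t₁)).comp (fderiv ℝ (Φ s t₁) (z s))))
      = fun s => (((fderiv ℝ L (z t₁)).comp (fderiv ℝ (Φ t t₁) (z t))).comp (B s)) := by
    funext s
    rw [hchain s, ContinuousLinearMap.comp_assoc]
  rw [htarget]
  set G : (Fin D → ℝ) →L[ℝ] ℝ := (fderiv ℝ L (z t₁)).comp (fderiv ℝ (Φ t t₁) (z t)) with hGdef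
  have hfinal := ((ContinuousLinearMap.compL ℝ (Fin D → ℝ) (Fin D → ℝ) ℝ) G).hasFDerivAt.comp_hasDerivAt
    t hB_deriv
  have hval : (ContinuousLinearMap.compL ℝ (Fin D → ℝ) (Fin D → ℝ) ℝ) G (-Df) = -(G.comp Df) := by
    simp [ContinuousLinearMap.compL_apply]
  rw [hval] at hfinal
  exact hfinal
end

section
/- Consider the augmented state (z, θ, t) evolving under d/dt (z, θ, t) = (f(z, θ, t), 0, 1). Then the adjoint dynamics of the augmented system give da_θ/dt = -a(t)ᵀ ∂f/∂θ and da_t/dt = -a(t)ᵀ ∂f/∂t, where a is the adjoint of z. -/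
/-- Augmented adjoint dynamics: for the augmented state `(z, θ, t)` evolving under
`(f(z,θ,t), 0, 1)`, if `A` is the augmented adjoint (satisfying
`dA/dt = -Aᵀ J_aug`), then its `θ`-component satisfies `da_θ/dt = -aᵀ ∂f/∂θ`
and its `t`-component satisfies `da_t/dt = -aᵀ ∂f/∂t`, where `a` is the
`z`-component of `A`. -/
theorem augmented_adjoint_dynamics
    {D P : ℕ} (f : (Fin D → ℝ) → (Fin P → ℝ) → ℝ → (Fin D → ℝ))
    (hf : ContDiff ℝ 1 (fun q : (Fin D → ℝ) × (Fin P → ℝ) × ℝ => f q.1 q.2.1 q.2.2))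
    (θ : Fin P → ℝ) (z : ℝ → (Fin D → ℝ))
    (hz : ∀ t, HasDerivAt z (f (z t) θ t) t)
    (A : ℝ → (((Fin D → ℝ) × (Fin P → ℝ) × ℝ) →L[ℝ] ℝ))
    (hA : ∀ t, HasDerivAt A
      (-(A t).comp (fderiv ℝ
        (fun q : (Fin D → ℝ) × (Fin P → ℝ) × ℝ =>
          ((f q.1 q.2.1 q.2.2, (0 : Fin P → ℝ), (1 : ℝ)) :
            (Fin D → ℝ) × (Fin P → ℝ) × ℝ)) (z t, θ, t))) t)
    (t : ℝ) :
    HasDerivAt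
      (fun s => (A s).comp
        ((ContinuousLinearMap.inr ℝ (Fin D → ℝ) ((Fin P → ℝ) × ℝ)).comp
          (ContinuousLinearMap.inl ℝ (Fin P → ℝ) ℝ)))
      (-(((A t).comp (ContinuousLinearMap.inl ℝ (Fin D → ℝ) ((Fin P → ℝ) × ℝ))).comp
          (fderiv ℝ (fun w => f (z t) w t) θ)) : (Fin P → ℝ) →L[ℝ] ℝ) t
    ∧
    HasDerivAt (fun s => (A s) ((0 : Fin D → ℝ), (0 : Fin P → ℝ), (1 : ℝ)))
      (-(((A t).comp (ContinuousLinearMap.inl ℝ (Fin D → ℝ) ((Fin P → ℝ) × ℝ)))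
          (deriv (fun s => f (z t) θ s) t))) t := by
  classical
  set E := (Fin D → ℝ) × (Fin P → ℝ) × ℝ
  set F : E → (Fin D → ℝ) := fun q => f q.1 q.2.1 q.2.2 with hFdef
  have hFd : Differentiable ℝ F := hf.differentiable one_ne_zero
  set DF : E →L[ℝ] (Fin D → ℝ) := fderiv ℝ F (z t, θ, t) with hDF
  -- Jacobian of the augmented map
  have hJ : fderiv ℝ
      (fun q : E => ((F q, (0 : Fin P → ℝ), (1 : ℝ)) : E)) (z t, θ, t)
      = DF.prod 0 := by
    refine HasFDerivAt.fderiv ?_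
    exact HasFDerivAt.prodMk ((hFd (z t, θ, t)).hasFDerivAt) (hasFDerivAt_const _ _)
  -- the θ-embedding
  set Bθ : (Fin P → ℝ) →L[ℝ] E :=
    (ContinuousLinearMap.inr ℝ (Fin D → ℝ) ((Fin P → ℝ) × ℝ)).comp
      (ContinuousLinearMap.inl ℝ (Fin P → ℝ) ℝ) with hBθ
  -- partial derivative in θ
  have hemb : HasFDerivAt (fun w : Fin P → ℝ => (((z t), w, t) : E)) Bθ θ := by
    have : HasFDerivAt (fun w : Fin P → ℝ => (((z t), w, t) : E))
        ((0 : (Fin P → ℝ) →L[ℝ] (Fin D → ℝ)).prod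
          ((ContinuousLinearMap.id ℝ (Fin P → ℝ)).prod 0)) θ :=
      HasFDerivAt.prodMk (hasFDerivAt_const _ _) (HasFDerivAt.prodMk (hasFDerivAt_id _) (hasFDerivAt_const _ _))
    have heq : Bθ = (0 : (Fin P → ℝ) →L[ℝ] (Fin D → ℝ)).prod
        ((ContinuousLinearMap.id ℝ (Fin P → ℝ)).prod 0) := by
      ext w <;> rfl
    rw [heq]; exact this
  have hpartθ : fderiv ℝ (fun w => f (z t) w t) θ = DF.comp Bθ := by
    have : HasFDerivAt (fun w => f (z t) w t) (DF.comp Bθ) θ := by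
      have := ((hFd (z t, θ, t)).hasFDerivAt).comp θ hemb
      exact this
    exact this.fderiv
  -- partial derivative in t
  have hembt : HasDerivAt (fun s : ℝ => (((z t), θ, s) : E))
      (((0 : Fin D → ℝ), (0 : Fin P → ℝ), (1 : ℝ)) : E) t :=
    HasDerivAt.prodMk (hasDerivAt_const _ _) (HasDerivAt.prodMk (hasDerivAt_const _ _) (hasDerivAt_id _))
  have hpartt : deriv (fun s => f (z t) θ s) t
      = DF (((0 : Fin D → ℝ), (0 : Fin P → ℝ), (1 : ℝ)) : E) := by
    have : HasDerivAt (fun s => f (z t) θ s)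
        (DF (((0 : Fin D → ℝ), (0 : Fin P → ℝ), (1 : ℝ)) : E)) t :=
      HasFDerivAt.comp_hasDerivAt (l := F) (l' := DF) t ((hFd (z t, θ, t)).hasFDerivAt) hembt
    exact this.deriv
  have hA' := hA t
  rw [show (fun q : E =>
      ((f q.1 q.2.1 q.2.2, (0 : Fin P → ℝ), (1 : ℝ)) : E))
      = (fun q : E => ((F q, (0 : Fin P → ℝ), (1 : ℝ)) : E)) from rfl, hJ] at hA'
  constructor
  · have h := hA'.clm_comp (hasDerivAt_const t Bθ)
    simp only [ContinuousLinearMap.comp_zero, add_zero] at h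
    convert h using 1
    ext w
    simp [hpartθ, hBθ]
  · have h := hA'.clm_apply
      (hasDerivAt_const t (((0 : Fin D → ℝ), (0 : Fin P → ℝ), (1 : ℝ)) : E))
    simp only [map_zero, add_zero] at h
    refine h.congr_deriv ?_
    simp [hpartt]
end

section
/- Under the hypotheses of the previous statement, if p(z(t), t) > 0 along a trajectory, then d/dt [log p(z(t), t)] = -Σᵢ (∂fᵢ/∂zᵢ)(z(t), t), i.e., the Liouville equation with zero diffusion implies the instantaneous change of variables formula. -/
open scoped BigOperators

/-- Under the Liouville equation, if `p(z(t), t) > 0` along a trajectory, then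
`d/dt log p(z(t), t) = -Σᵢ ∂fᵢ/∂zᵢ (z(t), t)`. -/
theorem liouville_log_derivative
    {D : ℕ} (f : (Fin D → ℝ) → ℝ → (Fin D → ℝ))
    (hf : ∀ t, Differentiable ℝ (fun x => f x t))
    (z : ℝ → (Fin D → ℝ))
    (hz : ∀ t, HasDerivAt z (f (z t) t) t)
    (p : (Fin D → ℝ) → ℝ → ℝ)
    (hp : ContDiff ℝ 1 (fun q : (Fin D → ℝ) × ℝ => p q.1 q.2))
    (hp_pos : ∀ t, 0 < p (z t) t)
    (hLiouville : ∀ x t,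
      HasDerivAt (fun s => p x s)
        (-∑ i, fderiv ℝ (fun y => f y t i * p y t) x (Pi.single i 1)) t)
    (t : ℝ) :
    HasDerivAt (fun s => Real.log (p (z s) s))
      (-∑ i, fderiv ℝ (fun y => f y t) (z t) (Pi.single i 1) i) t := by
  classical
  set x := z t with hx
  have hP : Differentiable ℝ (fun q : (Fin D → ℝ) × ℝ => p q.1 q.2) :=
    hp.differentiable one_ne_zero
  set Dp := fderiv ℝ (fun q : (Fin D → ℝ) × ℝ => p q.1 q.2) (x, t) with hDpdef
  have hDp : HasFDerivAt (fun q : (Fin D → ℝ) × ℝ => p q.1 q.2) Dp (x, t) :=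
    (hP (x, t)).hasFDerivAt
  -- partial derivative in the space variable
  have hpx : HasFDerivAt (fun y => p y t)
      (Dp.comp (ContinuousLinearMap.inl ℝ (Fin D → ℝ) ℝ)) x := by
    have h1 : HasFDerivAt (fun y : Fin D → ℝ => (y, t))
        (ContinuousLinearMap.inl ℝ (Fin D → ℝ) ℝ) x := hasFDerivAt_prodMk_left x t
    exact hDp.comp x h1
  -- partial derivative in time
  have hpt : HasDerivAt (fun s => p x s) (Dp (0, 1)) t := by
    have h1 : HasDerivAt (fun s : ℝ => ((x : Fin D → ℝ), s)) ((0 : Fin D → ℝ), (1 : ℝ)) t :=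
      (hasDerivAt_const t x).prodMk (hasDerivAt_id t)
    exact hDp.comp_hasDerivAt t h1
  have hDp01 : Dp (0, 1) = -∑ i, fderiv ℝ (fun y => f y t i * p y t) x (Pi.single i 1) :=
    hpt.unique (hLiouville x t)
  -- derivative along trajectory
  have hzp : HasDerivAt (fun s => p (z s) s) (Dp (f x t, 1)) t := by
    have h1 : HasDerivAt (fun s : ℝ => (z s, s)) (f x t, (1 : ℝ)) t :=
      (hz t).prodMk (hasDerivAt_id t)
    exact hDp.comp_hasDerivAt_of_eq t h1 rfl
  have hlog := hzp.log (hp_pos t).ne'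
  -- now compute the value
  set L := Dp.comp (ContinuousLinearMap.inl ℝ (Fin D → ℝ) ℝ) with hLdef
  have hdpx : DifferentiableAt ℝ (fun y => p y t) x := hpx.differentiableAt
  have hLf : Dp (f x t, 1) = L (f x t) + Dp (0, 1) := by
    have : ((f x t, (1 : ℝ)) : (Fin D → ℝ) × ℝ) = (f x t, 0) + (0, 1) := by
      simp [Prod.ext_iff]
    rw [this, map_add]
    rfl
  -- express L (f x t) as a sum
  have hsum : L (f x t) = ∑ i, f x t i * L (Pi.single i 1) := by
    have hv : (f x t) = ∑ i, f x t i • (Pi.single i (1 : ℝ) : Fin D → ℝ) := by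
      funext j
      simp [Finset.sum_apply, Pi.single_apply]
    conv_lhs => rw [hv]
    rw [map_sum]
    simp [smul_eq_mul]
  -- product rule for each component
  have hprod : ∀ i, fderiv ℝ (fun y => f y t i * p y t) x (Pi.single i 1)
      = f x t i * L (Pi.single i 1)
        + p x t * (fderiv ℝ (fun y => f y t) x (Pi.single i 1) i) := by
    intro i
    have hfi : HasFDerivAt (fun y => f y t i)
        ((ContinuousLinearMap.proj i).comp (fderiv ℝ (fun y => f y t) x)) x := by
      have h := (ContinuousLinearMap.proj (R := ℝ) (φ := fun _ : Fin D => ℝ) i).hasFDerivAt.comp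
        x (hf t x).hasFDerivAt
      exact h
    have hmul : HasFDerivAt (fun y => f y t i * p y t) _ x := hfi.mul hpx
    rw [hmul.fderiv]
    simp [hpx.fderiv]
  have hLp : L = fderiv ℝ (fun y => p y t) x := hpx.fderiv.symm
  have hval : Dp (f x t, 1) / p x t
      = -∑ i, fderiv ℝ (fun y => f y t) x (Pi.single i 1) i := by
    rw [hLf, hDp01, hsum]
    have : ∑ i, fderiv ℝ (fun y => f y t i * p y t) x (Pi.single i 1)
        = (∑ i, f x t i * L (Pi.single i 1))
          + p x t * ∑ i, fderiv ℝ (fun y => f y t) x (Pi.single i 1) i := by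
      rw [Finset.mul_sum, ← Finset.sum_add_distrib]
      exact Finset.sum_congr rfl fun i _ => hprod i
    rw [this]
    have hpne : p x t ≠ 0 := (hp_pos t).ne'
    field_simp
    ring
  rw [hval] at hlog
  exact hlog
end
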